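/- Let (S,∘) be a finite RC-quasigroup, M its structure monoid, and Δ the right-lcm of S in M. Then for every d ≥ 2, Δ^{d−1} equals ν(Δ•^{d−1}) where Δ• is the product of all elements of S in ℕ^(S) and ν is the I-structure ν(s₁⋯s_q) = Π_q(s₁,…,s_q); moreover, if (S,∘) is of class d, then Δ^d lies in the centre of M: Δ^d·g = g·Δ^d for every g in M. -/

import Mathlib

/-- The right-cyclic law: `(x∘y)∘(x∘z) = (y∘x)∘(y∘z)`. -/
def RCLaw {S : Type*} (op : S → S → S) : Prop :=
  ∀ x y z : S, op (op x y) (op x z) = op (op y x) (op y z)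

/-- The defining relations `s(s∘t) = t(t∘s)`, `s ≠ t`, of the structure monoid, as a relation
on the free monoid over `S`. -/
def rcRel {S : Type*} (op : S → S → S) : FreeMonoid S → FreeMonoid S → Prop :=
  fun a b => ∃ s t : S, s ≠ t ∧
    a = FreeMonoid.of s * FreeMonoid.of (op s t) ∧ b = FreeMonoid.of t * FreeMonoid.of (op t s)

/-- The structure monoid of `(S,∘)`: the monoid presented by generators `S` and relations
`s(s∘t) = t(t∘s)` for `s ≠ t`, realized as the quotient of the free monoid on `S` by the
congruence generated by these relations. -/
abbrev StructureMonoid {S : Type*} (op : S → S → S) := (conGen (rcRel op)).Quotient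

/-- The canonical generator of the structure monoid associated with `s ∈ S`. -/
def smGen {S : Type*} (op : S → S → S) (s : S) : StructureMonoid op :=
  (conGen (rcRel op)).mk' (FreeMonoid.of s)

/-- The monomials `Ωₙ`: `OmegaFin op n x` is `Ω_{n+1}(x₀,…,xₙ)`, defined by `Ω₁(x₁) = x₁` and
`Ωₙ(x₁,…,xₙ) = Ω_{n−1}(x₁,…,x_{n−1}) ∘ Ω_{n−1}(x₁,…,x_{n−2},xₙ)`. -/
def OmegaFin {S : Type*} (op : S → S → S) : (n : ℕ) → (Fin (n + 1) → S) → S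
  | 0, x => x 0
  | n + 1, x =>
      op (OmegaFin op n fun i => x i.castSucc)
         (OmegaFin op n fun i => if (i : ℕ) = n then x (Fin.last (n + 1)) else x i.castSucc)

/-- `Πₙ(x₁,…,xₙ) = ι(Ω₁(x₁))·ι(Ω₂(x₁,x₂))·…·ι(Ωₙ(x₁,…,xₙ))`, computed in the monoid `M`. -/
def PiFin {S M : Type*} [Monoid M] (op : S → S → S) (ι : S → M) (n : ℕ) (x : Fin n → S) : M :=
  ((List.finRange n).map fun i =>
    ι (OmegaFin op i.val fun j : Fin (i.val + 1) => x (Fin.castLE i.isLt j))).prod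

namespace S17

/-- Pairs (finsupp, permutation) with twisted multiplication. -/
@[ext]
structure TP (S : Type*) where
  a : S →₀ ℕ
  σ : Equiv.Perm S

namespace TP

variable {S : Type*}

instance : One (TP S) := ⟨⟨0, 1⟩⟩
noncomputable instance : Mul (TP S) := ⟨fun p q => ⟨p.a + Finsupp.mapDomain p.σ q.a, p.σ * q.σ⟩⟩

lemma mul_def (p q : TP S) :
    p * q = ⟨p.a + Finsupp.mapDomain p.σ q.a, p.σ * q.σ⟩ := rfl

lemma one_def : (1 : TP S) = ⟨0, 1⟩ := rfl

noncomputable instance : Monoid (TP S) where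
  mul_assoc p q r := by
    simp only [mul_def]
    ext x
    · simp [Finsupp.mapDomain_add, add_assoc, Equiv.Perm.coe_mul, Finsupp.mapDomain_comp]
    · simp [mul_assoc]
  one_mul p := by
    simp only [mul_def, one_def]
    ext x
    · simp [Equiv.Perm.coe_one]
    · simp
  mul_one p := by
    simp only [mul_def, one_def]
    ext x
    · simp
    · simp

end TP

variable {S : Type*} (op : S → S → S)

/-- The inverse of the left translation. -/
noncomputable def lam (hlb : ∀ s : S, Function.Bijective (op s)) (s : S) : Equiv.Perm S :=
  (Equiv.ofBijective (op s) (hlb s)).symm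

variable {op}

lemma lam_op (hlb : ∀ s : S, Function.Bijective (op s)) (s t : S) :
    lam op hlb s (op s t) = t := by
  simpa [lam] using (Equiv.ofBijective (op s) (hlb s)).symm_apply_apply t

lemma op_lam (hlb : ∀ s : S, Function.Bijective (op s)) (s t : S) :
    op s (lam op hlb s t) = t :=
  (Equiv.ofBijective (op s) (hlb s)).apply_symm_apply t

variable (op)

/-- The lift of `s ↦ (δ_s, λ_s)` to the free monoid. -/
noncomputable def phi (hlb : ∀ s : S, Function.Bijective (op s)) : FreeMonoid S →* TP S :=
  FreeMonoid.lift fun s => ⟨Finsupp.single s 1, lam op hlb s⟩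

/-- The I-structure homomorphism from the structure monoid. -/
noncomputable def hmap (hRC : RCLaw op) (hlb : ∀ s : S, Function.Bijective (op s)) :
    StructureMonoid op →* TP S :=
  Con.lift _ (phi op hlb) (Con.conGen_le.2 (by
    rintro a b ⟨s, t, hst, rfl, rfl⟩
    show phi op hlb _ = phi op hlb _
    rw [map_mul, map_mul]
    simp only [phi, FreeMonoid.lift_eval_of]
    rw [TP.mul_def, TP.mul_def]
    ext x
    · simp only [Finsupp.mapDomain_single, lam_op hlb]
      rw [add_comm]
    · -- permutation component
      have key : (lam op hlb s * lam op hlb (op s t)) =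
          (lam op hlb t * lam op hlb (op t s)) := by
        rw [← inv_inj]
        simp only [mul_inv_rev]
        ext z
        have h1 : ∀ u : S, (lam op hlb u)⁻¹ = Equiv.ofBijective (op u) (hlb u) := fun u => rfl
        simp only [h1, Equiv.Perm.mul_apply, Equiv.ofBijective_apply]
        exact hRC s t z
      simpa using congrArg (fun e => e x) key))

lemma hmap_coe (hRC : RCLaw op) (hlb : ∀ s : S, Function.Bijective (op s)) (w : FreeMonoid S) :
    hmap op hRC hlb (↑w) = phi op hlb w :=
  Con.lift_coe _ w

lemma hmap_gen (hRC : RCLaw op) (hlb : ∀ s : S, Function.Bijective (op s)) (s : S) :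
    hmap op hRC hlb (smGen op s) = ⟨Finsupp.single s 1, lam op hlb s⟩ := by
  show hmap op hRC hlb (↑(FreeMonoid.of s)) = _
  rw [hmap_coe]
  simp [phi, FreeMonoid.lift_eval_of]



open List

variable {S : Type*} (op : S → S → S)

/-- `Om r t = Ω_{|r|+1}(reverse r, t)`. -/
def Om : List S → S → S
  | [], t => t
  | u :: r, t => op (Om r u) (Om r t)

/-- `Pw r = Π_{|r|}(reverse r)`. -/
def Pw : List S → StructureMonoid op
  | [] => 1
  | u :: r => Pw r * smGen op (Om op r u)

@[simp] lemma om_nil (t : S) : Om op [] t = t := rfl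
@[simp] lemma om_cons (u : S) (r : List S) (t : S) :
    Om op (u :: r) t = op (Om op r u) (Om op r t) := rfl
@[simp] lemma pw_nil : Pw op ([] : List S) = 1 := rfl
@[simp] lemma pw_cons (u : S) (r : List S) :
    Pw op (u :: r) = Pw op r * smGen op (Om op r u) := rfl

lemma omegaFin_eq_om (n : ℕ) (x : Fin (n + 1) → S) :
    OmegaFin op n x = Om op (List.ofFn fun i : Fin n => x i.castSucc).reverse (x (Fin.last n)) := by
  induction n with
  | zero =>
      simp only [List.ofFn_zero, List.reverse_nil, om_nil]
      show x 0 = x (Fin.last 0)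
      congr 1
  | succ n ih =>
      show op (OmegaFin op n fun i => x i.castSucc)
          (OmegaFin op n fun i => if (i : ℕ) = n then x (Fin.last (n + 1)) else x i.castSucc) = _
      rw [ih, ih]
      rw [List.ofFn_succ' (fun i : Fin (n+1) => x i.castSucc)]
      rw [List.concat_eq_append, List.reverse_append]
      have hz : (fun i : Fin n => if ((i.castSucc : Fin (n+1)) : ℕ) = n
          then x (Fin.last (n + 1)) else x i.castSucc.castSucc) =
          fun i : Fin n => x i.castSucc.castSucc := by
        funext i
        exact if_neg (by simpa using i.isLt.ne)
      have hl : (if ((Fin.last n : Fin (n+1)) : ℕ) = n then x (Fin.last (n + 1))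
          else x (Fin.last n).castSucc) = x (Fin.last (n + 1)) := if_pos (Fin.val_last n)
      rw [hz, hl]
      rfl

variable {S : Type*} (op : S → S → S)

lemma omegaFin_val_congr {m m' : ℕ} (h : m = m') (x : Fin (m + 1) → S) (x' : Fin (m' + 1) → S)
    (hx : ∀ (j : ℕ) (hj : j < m + 1) (hj' : j < m' + 1), x ⟨j, hj⟩ = x' ⟨j, hj'⟩) :
    OmegaFin op m x = OmegaFin op m' x' := by
  subst h
  have : x = x' := funext fun j => by
    rcases j with ⟨j, hj⟩
    exact hx j hj hj
  rw [this]

lemma piFin_succ {M : Type*} [Monoid M] (ι : S → M) (n : ℕ) (x : Fin (n + 1) → S) :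
    PiFin op ι (n + 1) x =
      PiFin op ι n (fun i => x i.castSucc) * ι (OmegaFin op n x) := by
  unfold PiFin
  rw [← List.ofFn_eq_map, ← List.ofFn_eq_map]
  rw [List.ofFn_succ', List.concat_eq_append, List.prod_append]
  refine congrArg₂ (· * ·) ?_ ?_
  · refine congrArg List.prod ?_
    refine congrArg List.ofFn (funext fun i => ?_)
    refine congrArg ι ?_
    refine omegaFin_val_congr op (Fin.coe_castSucc i) _ _ fun j hj hj' => ?_
    exact congrArg x (Fin.ext rfl)
  · rw [List.prod_singleton]
    refine congrArg ι ?_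
    refine omegaFin_val_congr op (Fin.val_last n) _ _ fun j hj hj' => ?_
    exact congrArg x (Fin.ext rfl)

lemma piFin_eq_pw (n : ℕ) (x : Fin n → S) :
    PiFin op (smGen op) n x = Pw op (List.ofFn x).reverse := by
  induction n with
  | zero => simp [PiFin, Pw, List.ofFn_zero]
  | succ n ih =>
      rw [piFin_succ, ih, omegaFin_eq_om]
      rw [List.ofFn_succ' x, List.concat_eq_append, List.reverse_append]
      rfl

lemma piFin_list (l : List S) :
    PiFin op (smGen op) l.length l.get = Pw op l.reverse := by
  rw [piFin_eq_pw, List.ofFn_get]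

lemma om_append (q r : List S) (t : S) :
    Om op (q ++ r) t = Om op (q.map (Om op r)) (Om op r t) := by
  induction q generalizing t with
  | nil => rfl
  | cons u q ih => simp only [List.cons_append, om_cons, List.map_cons, ih]

lemma pw_append (q r : List S) :
    Pw op (q ++ r) = Pw op r * Pw op (q.map (Om op r)) := by
  induction q with
  | nil => simp
  | cons u q ih =>
      simp only [List.cons_append, pw_cons, List.map_cons, ih, om_append, mul_assoc]

lemma om_bijective (hlb : ∀ s : S, Function.Bijective (op s)) (r : List S) :
    Function.Bijective (Om op r) := by
  induction r with
  | nil => exact Function.bijective_id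
  | cons u r ih => exact (hlb (Om op r u)).comp ih


/-- The I-structure property of `Pw`: first component of `hmap (Pw r)` is the multiset of `r`,
and the permutation component inverts `Om r`. -/
lemma hmap_pw (hRC : RCLaw op) (hlb : ∀ s : S, Function.Bijective (op s)) (r : List S) :
    (hmap op hRC hlb (Pw op r)).a = (r.map fun s => Finsupp.single s 1).sum ∧
    ∀ t : S, (hmap op hRC hlb (Pw op r)).σ (Om op r t) = t := by
  induction r with
  | nil =>
      constructor
      · show (hmap op hRC hlb 1).a = 0
        rw [map_one]; rfl
      · intro t
        show (hmap op hRC hlb 1).σ t = t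
        rw [map_one]; rfl
  | cons u r ih =>
      have hmul : hmap op hRC hlb (Pw op (u :: r)) =
          hmap op hRC hlb (Pw op r) * ⟨Finsupp.single (Om op r u) 1, lam op hlb (Om op r u)⟩ := by
        rw [pw_cons, map_mul, hmap_gen]
      constructor
      · rw [hmul, TP.mul_def]
        show (hmap op hRC hlb (Pw op r)).a
            + Finsupp.mapDomain (⇑(hmap op hRC hlb (Pw op r)).σ) (Finsupp.single (Om op r u) 1)
            = ((u :: r).map fun s => Finsupp.single s 1).sum
        rw [ih.1, Finsupp.mapDomain_single, ih.2 u, List.map_cons, List.sum_cons, add_comm]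
      · intro t
        rw [hmul, TP.mul_def]
        show (hmap op hRC hlb (Pw op r)).σ (lam op hlb (Om op r u) (op (Om op r u) (Om op r t))) = t
        rw [lam_op hlb, ih.2 t]

lemma hmap_a_zero (hRC : RCLaw op) (hlb : ∀ s : S, Function.Bijective (op s))
    (g : StructureMonoid op) (h : (hmap op hRC hlb g).a = 0) : g = 1 := by
  induction g using Con.induction_on with
  | _ w =>
    induction w using FreeMonoid.recOn with
    | one => rfl
    | of_mul s w _ =>
        exfalso
        rw [show ((↑(FreeMonoid.of s * w) : StructureMonoid op)) =
            smGen op s * ↑w from Con.coe_mul _ _, map_mul, hmap_gen] at h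
        have := congrArg (fun f : S →₀ ℕ => f s) h
        simp only [TP.mul_def, Finsupp.add_apply, Finsupp.coe_zero, Pi.zero_apply,
          Finsupp.single_eq_same] at this
        omega

lemma hmap_a_pos_of_dvd (hRC : RCLaw op) (hlb : ∀ s : S, Function.Bijective (op s))
    (g : StructureMonoid op) (s : S) (h : smGen op s ∣ g) : 1 ≤ (hmap op hRC hlb g).a s := by
  obtain ⟨c, rfl⟩ := h
  rw [map_mul, hmap_gen, TP.mul_def]
  show 1 ≤ ((Finsupp.single s 1 + Finsupp.mapDomain (⇑(lam op hlb s)) ((hmap op hRC hlb c).a) : S →₀ ℕ)) s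
  rw [Finsupp.add_apply, Finsupp.single_eq_same]
  omega

end S17


open S17 in
/-- Let `(S,∘)` be a finite RC-quasigroup, `M` its structure monoid, `Δ`
the right-lcm of `S` in `M`, `Δ•` the product of all elements of `S` in `ℕ^(S)`, and `ν` the
`I`-structure `ν(s₁⋯s_q) = Π_q(s₁,…,s_q)`. Then `Δ^{d−1} = ν(Δ•^{d−1})` for every `d ≥ 2`,
and if `(S,∘)` is of class `d` then `Δ^d` is central in `M`. -/
theorem statement17 {S : Type*} [Fintype S] (op : S → S → S)
    (hRC : RCLaw op) (hlb : ∀ s : S, Function.Bijective (op s))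
    (ν : (S →₀ ℕ) → StructureMonoid op)
    (hν : ∀ l : List S,
      ν ((l.map fun s => Finsupp.single s 1).sum) = PiFin op (smGen op) l.length l.get)
    (Δ : StructureMonoid op)
    (hΔ : (∀ s : S, smGen op s ∣ Δ) ∧ ∀ k, (∀ s : S, smGen op s ∣ k) → Δ ∣ k) :
    (∀ d : ℕ, 2 ≤ d → Δ ^ (d - 1) = ν ((d - 1) • ∑ s : S, Finsupp.single s 1)) ∧
    (∀ d : ℕ, (∀ s t : S, OmegaFin op d (Fin.snoc (fun _ : Fin d => s) t) = t) →
      ∀ g : StructureMonoid op, Δ ^ d * g = g * Δ ^ d) := by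
  classical
  set l₀ : List S := Finset.univ.toList with hl₀def
  -- permutation invariance of Pw, from hν
  have pwperm : ∀ {r r' : List S}, r.Perm r' → Pw op r = Pw op r' := by
    intro r r' h
    have e : ∀ m : List S, Pw op m = ν ((m.reverse.map fun s => Finsupp.single s 1).sum) := by
      intro m
      rw [hν m.reverse, piFin_list, List.reverse_reverse]
    rw [e r, e r']
    congr 1
    exact List.Perm.sum_eq
      ((((r.reverse_perm).trans h).trans (r'.reverse_perm).symm).map _)
  -- bijections map enumerations to enumerations
  have permuniv : ∀ {g : S → S}, Function.Bijective g → ∀ {m : List S},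
      m.Perm l₀ → (m.map g).Perm l₀ := by
    intro g hg m hm
    have h1 : (l₀.map g).Perm l₀ := by
      rw [← Multiset.coe_eq_coe, ← Multiset.map_coe]
      show Multiset.map g ↑l₀ = (↑l₀ : Multiset S)
      rw [hl₀def, Finset.coe_toList]
      have h3 := congrArg Finset.val (Finset.map_univ_equiv (Equiv.ofBijective g hg))
      rw [Finset.map_val] at h3
      simpa using h3
    exact (hm.map g).trans h1
  -- every generator left-divides Pw l₀
  have head : ∀ (r : List S) (s : S), ∃ c, Pw op (r ++ [s]) = smGen op s * c := by
    intro r s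
    induction r with
    | nil =>
        refine ⟨1, ?_⟩
        rw [List.nil_append, pw_cons, pw_nil, om_nil, one_mul, mul_one]
    | cons u r ih =>
        obtain ⟨c, hc⟩ := ih
        exact ⟨c * smGen op (Om op (r ++ [s]) u), by
          rw [List.cons_append, pw_cons, hc, mul_assoc]⟩
  have gendvd : ∀ s : S, smGen op s ∣ Pw op l₀ := by
    intro s
    have hs : s ∈ l₀ := Finset.mem_toList.2 (Finset.mem_univ s)
    obtain ⟨c, hc⟩ := head (l₀.erase s) s
    exact ⟨c, by
      rw [← hc]
      exact pwperm ((List.perm_cons_erase hs).trans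
        (List.perm_append_singleton s _).symm)⟩
  -- Δ equals Pw l₀
  have hΔeq : Δ = Pw op l₀ := by
    obtain ⟨c, hc'⟩ : Δ ∣ Pw op l₀ := hΔ.2 _ gendvd
    have hA : ((l₀.map fun s => Finsupp.single s 1).sum)
        = (hmap op hRC hlb Δ).a
          + Finsupp.mapDomain (⇑(hmap op hRC hlb Δ).σ) (hmap op hRC hlb c).a := by
      rw [← (hmap_pw op hRC hlb l₀).1, hc', map_mul]; rfl
    have hval : ∀ s : S, ((l₀.map fun t => Finsupp.single t 1).sum) s = 1 := by
      intro s
      rw [hl₀def, Finset.sum_map_toList, Finsupp.finset_sum_apply]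
      simp [Finsupp.single_apply]
    have hzero : ∀ s : S,
        (Finsupp.mapDomain (⇑(hmap op hRC hlb Δ).σ) (hmap op hRC hlb c).a) s = 0 := by
      intro s
      have h2 := hmap_a_pos_of_dvd op hRC hlb Δ s (hΔ.1 s)
      have h3 := congrArg (fun f : S →₀ ℕ => f s) hA
      simp only [Finsupp.add_apply] at h3
      rw [hval s] at h3
      omega
    have hc0 : (hmap op hRC hlb c).a = 0 := by
      apply Finsupp.mapDomain_injective ((hmap op hRC hlb Δ).σ.injective)
      rw [Finsupp.mapDomain_zero]
      ext s
      simpa using hzero s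
    have : c = 1 := hmap_a_zero op hRC hlb c hc0
    rw [hc', this, mul_one]
  -- powers of Δ
  have powJk : ∀ (k : ℕ) (m : List S), m.Perm l₀ →
      Pw op ((List.replicate k m).flatten) = (Pw op l₀) ^ k := by
    intro k
    induction k with
    | zero => intro m _; simp
    | succ k ih =>
        intro m hm
        have h1 : ((List.replicate (k + 1) m).flatten) = m ++ (List.replicate k m).flatten := by
          rw [List.replicate_succ, List.flatten_cons]
        have h2 : Pw op (m ++ (List.replicate k m).flatten)
            = Pw op ((List.replicate k m).flatten ++ m) := pwperm List.perm_append_comm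
        rw [h1, h2, pw_append, List.map_flatten, List.map_replicate,
          ih (m.map (Om op m)) (permuniv (om_bijective op hlb m) hm), pwperm hm, pow_succ']
  constructor
  · -- Part 1
    intro d _
    have hsum : (((List.replicate (d - 1) l₀).flatten).map fun s => Finsupp.single s 1).sum
        = (d - 1) • ∑ s : S, Finsupp.single s 1 := by
      rw [List.map_flatten, List.map_replicate, List.sum_flatten, List.map_replicate,
        List.sum_replicate, hl₀def, Finset.sum_map_toList]
    rw [← hsum, hν, piFin_list, pwperm (List.reverse_perm _),
      powJk (d - 1) l₀ (List.Perm.refl l₀), hΔeq]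
  · -- Part 2
    intro d hcl g
    have omrep : ∀ s t : S, Om op (List.replicate d s) t = t := by
      intro s t
      have h0 := hcl s t
      rw [omegaFin_eq_om] at h0
      have h1 : (List.ofFn fun i : Fin d =>
          (Fin.snoc (fun _ : Fin d => s) t : Fin (d + 1) → S) i.castSucc)
          = List.replicate d s := by
        rw [show (fun i : Fin d => (Fin.snoc (fun _ : Fin d => s) t : Fin (d + 1) → S) i.castSucc)
            = fun _ : Fin d => s from funext fun i => Fin.snoc_castSucc _ _ i]
        exact List.ofFn_const d s
      rw [h1, List.reverse_replicate, Fin.snoc_last] at h0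
      exact h0
    have omBl : ∀ (m : List S) (t : S),
        Om op ((m.map fun u => List.replicate d u).flatten) t = t := by
      intro m
      induction m with
      | nil => intro t; rfl
      | cons s m ih =>
          intro t
          rw [List.map_cons, List.flatten_cons, om_append]
          have hmr : (List.replicate d s).map (Om op ((m.map fun u => List.replicate d u).flatten))
              = List.replicate d s := by
            rw [List.map_replicate, ih s]
          rw [hmr, ih t, omrep]
    have Qcons : ∀ (s : S) (m : List S),
        Pw op (((s :: m).map fun u => List.replicate d u).flatten)
          = Pw op ((m.map fun u => List.replicate d u).flatten)
            * Pw op (List.replicate d s) := by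
      intro s m
      rw [List.map_cons, List.flatten_cons, pw_append]
      have hmr : (List.replicate d s).map (Om op ((m.map fun u => List.replicate d u).flatten))
          = List.replicate d s := by
        rw [List.map_replicate, omBl]
      rw [hmr]
    have STAR : ∀ (x : S) (q : List S),
        smGen op x * Pw op (q.map (op x)) = Pw op q * smGen op (Om op q x) := by
      intro x q
      have h1 : Pw op (x :: q) = Pw op q * smGen op (Om op q x) := rfl
      have h2 : Pw op (x :: q) = Pw op (q ++ [x]) :=
        pwperm (List.perm_append_singleton x q).symm
      have h3 : Pw op (q ++ [x]) = Pw op [x] * Pw op (q.map (Om op [x])) := pw_append op q [x]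
      have h4 : Pw op [x] = smGen op x := by
        rw [pw_cons, pw_nil, om_nil, one_mul]
      have h5 : Om op [x] = op x := funext fun y => rfl
      rw [← h1, h2, h3, h4, h5]
    have STARd : ∀ t u : S, smGen op t * Pw op (List.replicate d u)
        = Pw op (List.replicate d (lam op hlb t u)) * smGen op t := by
      intro t u
      have h := STAR t (List.replicate d (lam op hlb t u))
      rw [List.map_replicate, op_lam hlb, omrep] at h
      exact h
    have PUSH : ∀ (t : S) (m : List S),
        smGen op t * Pw op ((m.map fun u => List.replicate d u).flatten)
          = Pw op (((m.map (lam op hlb t)).map fun u => List.replicate d u).flatten)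
            * smGen op t := by
      intro t m
      induction m with
      | nil => simp
      | cons s m ih =>
          rw [Qcons, List.map_cons, Qcons, ← mul_assoc, ih, mul_assoc, STARd, ← mul_assoc]
    have countJk : ∀ (k : ℕ) (r : List S) (a : S),
        ((List.replicate k r).flatten).count a = k * r.count a := by
      intro k r a
      induction k with
      | zero => simp
      | succ k ih =>
          rw [List.replicate_succ, List.flatten_cons, List.count_append, ih]
          ring
    have countBl : ∀ (m : List S) (a : S),
        ((m.map fun u => List.replicate d u).flatten).count a = d * m.count a := by
      intro m a
      induction m with
      | nil => simp
      | cons s m ih =>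
          rw [List.map_cons, List.flatten_cons, List.count_append, ih, List.count_replicate,
            List.count_cons]
          by_cases h : a = s
          · subst h
            simp only [beq_self_eq_true, if_true, ih, Nat.mul_add, Nat.mul_one]
            omega
          · have h' : (s == a) = false := by simpa [beq_iff_eq] using Ne.symm h
            have h'' : (a == s) = false := by simpa [beq_iff_eq] using h
            simp [h', h'']
    have blperm : ∀ m : List S, m.Perm l₀ →
        ((m.map fun u => List.replicate d u).flatten).Perm
          ((List.replicate d l₀).flatten) := by
      intro m hm
      rw [List.perm_iff_count]
      intro a
      rw [countBl, countJk, hm.count_eq]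
    have genscomm : ∀ t : S, smGen op t * Δ ^ d = Δ ^ d * smGen op t := by
      intro t
      have hQ : Δ ^ d = Pw op ((l₀.map fun u => List.replicate d u).flatten) := by
        rw [hΔeq, ← powJk d l₀ (List.Perm.refl l₀)]
        exact (pwperm (blperm l₀ (List.Perm.refl l₀))).symm
      rw [hQ, PUSH t l₀]
      congr 1
      exact pwperm ((blperm (l₀.map (lam op hlb t))
        (permuniv (lam op hlb t).bijective (List.Perm.refl l₀))).trans
        (blperm l₀ (List.Perm.refl l₀)).symm)
    induction g using Con.induction_on with
    | _ w =>
      induction w using FreeMonoid.recOn with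
      | one =>
          show Δ ^ d * ((1 : FreeMonoid S) : StructureMonoid op) = _
          rw [Con.coe_one, mul_one, one_mul]
      | of_mul s w ihw =>
          rw [Con.coe_mul,
            show ((FreeMonoid.of s : FreeMonoid S) : StructureMonoid op) = smGen op s from rfl,
            ← mul_assoc, ← genscomm s, mul_assoc, ihw, ← mul_assoc]
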